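/- Solution of the renormalization problem (paper's Theorem 5.2): Let m ≥ 1, let u : ℝ^{n−1} → ℝ be arbitrary, and let u' : ℝ^{n−1} → ℝ be its harmonic extension from V_{m−1} to V_m. Then E_m(u') = (n/(n+2)) · E_{m−1}(u). -/

import Mathlib

open Finset

noncomputable section

/-- Ambient Euclidean space `ℝ^{n-1}`. -/
abbrev Amb (n : ℕ) := EuclideanSpace ℝ (Fin (n - 1))

/-- The contraction `f_i(x) = (x + x_i)/2`. -/
def fmap {n : ℕ} (pts : Fin n → Amb n) (i : Fin n) (x : Amb n) : Amb n :=
  (2 : ℝ)⁻¹ • (x + pts i)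

/-- Composition of contractions along a list (first entry applied last... actually first). -/
def fList {n : ℕ} (pts : Fin n → Amb n) : List (Fin n) → Amb n → Amb n
  | [] => id
  | i :: t => fmap pts i ∘ fList pts t

/-- The `m`-contraction `f_w = f_{w_0} ∘ ⋯ ∘ f_{w_{m-1}}`. -/
def fWord {n m : ℕ} (pts : Fin n → Amb n) (w : Fin m → Fin n) : Amb n → Amb n :=
  fList pts (List.ofFn w)

/-- The vertex set `V_m = ⋃_w f_w(V_0)`, where `V_0 = {x_0, …, x_{n-1}}`. -/
def V {n : ℕ} (pts : Fin n → Amb n) (m : ℕ) : Set (Amb n) :=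
  ⋃ w : Fin m → Fin n, fWord pts w '' Set.range pts

/-- Adjacency in the graph `Γ_m`. -/
def Adj {n : ℕ} (pts : Fin n → Amb n) (m : ℕ) (x y : Amb n) : Prop :=
  x ≠ y ∧ ∃ w : Fin m → Fin n,
    x ∈ fWord pts w '' Set.range pts ∧ y ∈ fWord pts w '' Set.range pts

/-- The graph Laplacian `Δ_m u (x) = ∑_{y ~ x} (u(x) - u(y))`. -/
def lap {n : ℕ} (pts : Fin n → Amb n) (m : ℕ) (u : Amb n → ℝ) (x : Amb n) : ℝ :=
  ∑ᶠ y ∈ {y | Adj pts m x y}, (u x - u y)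

/-- `u` is an eigenfunction of `Δ_m` with eigenvalue `lam`:
`Δ_m u (x) = lam * u x` for all `x ∈ V_m \ V_0`. -/
def IsEigen {n : ℕ} (pts : Fin n → Amb n) (m : ℕ) (u : Amb n → ℝ) (lam : ℝ) : Prop :=
  ∀ x ∈ V pts m \ V pts 0, lap pts m u x = lam * u x

/-- The point `x_{r,s} = f_a((x_r + x_s)/2)` for a word `a` of length `m-1`. -/
def xpt {n m : ℕ} (pts : Fin n → Amb n) (a : Fin m → Fin n) (r s : Fin n) : Amb n :=
  fWord pts a ((2 : ℝ)⁻¹ • (pts r + pts s))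

/-- The graph energy `E_m(u) = ∑_{x ~ y} (u(x) - u(y))²`, summed over unordered
adjacent pairs (each ordered pair counted once, then halved). -/
def energy {n : ℕ} (pts : Fin n → Amb n) (m : ℕ) (u : Amb n → ℝ) : ℝ :=
  (2 : ℝ)⁻¹ * ∑ᶠ p ∈ {p : Amb n × Amb n | Adj pts m p.1 p.2}, (u p.1 - u p.2) ^ 2

/-! ### Auxiliary development -/

namespace Renorm

variable {n : ℕ}

/-- Barycentric weights of `fList pts L (pts i)`. -/
def wt : List (Fin n) → Fin n → Fin n → ℝ
  | [], i, l => if i = l then 1 else 0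
  | k :: L, i, l => (wt L i l + if k = l then 1 else 0) / 2

lemma wt_nonneg (L : List (Fin n)) (i l : Fin n) : 0 ≤ wt L i l := by
  induction L with
  | nil => simp only [wt]; split <;> norm_num
  | cons k L ih =>
      simp only [wt]
      have : (0:ℝ) ≤ if k = l then (1:ℝ) else 0 := by split <;> norm_num
      positivity

lemma wt_le_one (L : List (Fin n)) (i l : Fin n) : wt L i l ≤ 1 := by
  induction L with
  | nil => simp only [wt]; split <;> norm_num
  | cons k L ih =>
      simp only [wt]
      have : (if k = l then (1:ℝ) else 0) ≤ 1 := by split <;> norm_num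
      linarith

lemma wt_sum (L : List (Fin n)) (i : Fin n) : ∑ l, wt L i l = 1 := by
  induction L with
  | nil =>
      simp only [wt]
      rw [Finset.sum_ite_eq Finset.univ i (fun _ => (1:ℝ))]
      simp
  | cons k L ih =>
      simp only [wt]
      rw [← Finset.sum_div, Finset.sum_add_distrib, ih,
        Finset.sum_ite_eq Finset.univ k (fun _ => (1:ℝ))]
      simp

variable (pts : Fin n → Amb n)

lemma sum_ite_smul (q : Fin n) : ∑ l, (if q = l then (1:ℝ) else 0) • pts l = pts q := by
  simp only [ite_smul, one_smul, zero_smul]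
  rw [Finset.sum_ite_eq Finset.univ q pts]
  simp

lemma fList_eq_sum (L : List (Fin n)) (i : Fin n) :
    fList pts L (pts i) = ∑ l, wt L i l • pts l := by
  induction L with
  | nil =>
      simp only [fList, id_eq, wt]
      rw [sum_ite_smul pts i]
  | cons k L ih =>
      simp only [fList, Function.comp_apply, fmap, ih, wt]
      have hk : pts k = ∑ l, (if k = l then (1:ℝ) else 0) • pts l :=
        (sum_ite_smul pts k).symm
      rw [hk, ← Finset.sum_add_distrib, Finset.smul_sum]
      refine Finset.sum_congr rfl fun l _ => ?_
      rw [← add_smul, smul_smul]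
      congr 1
      ring

lemma weights_unique (hpts : AffineIndependent ℝ pts) {c d : Fin n → ℝ}
    (hc : ∑ l, c l = 1) (hd : ∑ l, d l = 1)
    (h : ∑ l, c l • pts l = ∑ l, d l • pts l) : c = d := by
  refine (affineIndependent_iff_eq_of_fintype_affineCombination_eq ℝ pts).1 hpts c d hc hd ?_
  rw [Finset.affineCombination_eq_linear_combination _ _ _ hc,
    Finset.affineCombination_eq_linear_combination _ _ _ hd]
  exact h

lemma wt_unique (hpts : AffineIndependent ℝ pts) {L L' : List (Fin n)} {i i' : Fin n}
    (h : fList pts L (pts i) = fList pts L' (pts i')) : wt L i = wt L' i' := by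
  apply weights_unique pts hpts (wt_sum L i) (wt_sum L' i')
  rw [← fList_eq_sum, ← fList_eq_sum, h]

lemma eq_of_wt_eq_one (hpts : AffineIndependent ℝ pts) {L : List (Fin n)} {i q : Fin n}
    (h : wt L i q = 1) : fList pts L (pts i) = pts q := by
  have hall : ∀ l, wt L i l = if q = l then 1 else 0 := by
    have hsum := wt_sum L i
    have hrest : ∑ l ∈ Finset.univ.erase q, wt L i l = 0 := by
      have := Finset.add_sum_erase Finset.univ (wt L i) (Finset.mem_univ q)
      rw [hsum] at this
      linarith [this, h]
    intro l
    by_cases hl : q = l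
    · subst hl; simp [h]
    · simp only [hl, if_false]
      have := (Finset.sum_eq_zero_iff_of_nonneg
        (fun x _ => wt_nonneg L i x)).1 hrest l (Finset.mem_erase.2 ⟨fun hx => hl hx.symm, Finset.mem_univ l⟩)
      exact this
  rw [fList_eq_sum, Finset.sum_congr rfl (fun l _ => by rw [hall l]), sum_ite_smul pts q]

lemma fmap_injective (k : Fin n) : Function.Injective (fmap pts k) := by
  intro x y h
  simp only [fmap] at h
  have h2 := congrArg (fun z => (2:ℝ) • z) h
  simp only [smul_smul] at h2
  norm_num at h2
  exact h2

lemma fList_injective (L : List (Fin n)) : Function.Injective (fList pts L) := by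
  induction L with
  | nil => exact fun x y h => h
  | cons k L ih => exact fun x y h => ih (fmap_injective pts k h)

/-- Two distinct points lying in two cells force the cells (words) to be equal. -/
lemma cell_sep (hpts : AffineIndependent ℝ pts) :
    ∀ (L L' : List (Fin n)), L.length = L'.length →
    ∀ (i j i' j' : Fin n), fList pts L (pts i) = fList pts L' (pts i') →
    fList pts L (pts j) = fList pts L' (pts j') →
    fList pts L (pts i) ≠ fList pts L (pts j) → L = L' := by
  intro L
  induction L with
  | nil =>
      intro L' hlen
      cases L' with
      | nil => intro _ _ _ _ _ _ _; rfl
      | cons a T => simp at hlen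
  | cons p T ih =>
      intro L' hlen
      cases L' with
      | nil => simp at hlen
      | cons p' T' =>
          intro i j i' j' h1 h2 hne
          by_cases hp : p = p'
          · subst hp
            have e1 : fList pts T (pts i) = fList pts T' (pts i') :=
              fmap_injective pts p h1
            have e2 : fList pts T (pts j) = fList pts T' (pts j') :=
              fmap_injective pts p h2
            have hne' : fList pts T (pts i) ≠ fList pts T (pts j) := by
              intro hcontr
              exact hne (by simp only [fList, Function.comp_apply, hcontr])
            have := ih T' (by simpa using hlen) i j i' j' e1 e2 hne'
            rw [this]
          · exfalso
            -- weights at coordinate p' force both points to be pts p' after peeling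
            have w1 := wt_unique pts hpts h1
            have w2 := wt_unique pts hpts h2
            have hv1 : wt (p :: T) i p' = (wt T i p' + 0) / 2 := by
              simp only [wt, hp, if_false]
            have hv1' : wt (p' :: T') i' p' = (wt T' i' p' + 1) / 2 := by
              simp [wt]
            have hv2 : wt (p :: T) j p' = (wt T j p' + 0) / 2 := by
              simp only [wt, hp, if_false]
            have hv2' : wt (p' :: T') j' p' = (wt T' j' p' + 1) / 2 := by
              simp [wt]
            have e1 : wt T i p' = wt T' i' p' + 1 := by
              have := congrFun w1 p'
              rw [hv1, hv1'] at this
              linarith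
            have e2 : wt T j p' = wt T' j' p' + 1 := by
              have := congrFun w2 p'
              rw [hv2, hv2'] at this
              linarith
            have hi1 : wt T i p' = 1 :=
              le_antisymm (wt_le_one T i p') (by linarith [wt_nonneg T' i' p'])
            have hj1 : wt T j p' = 1 :=
              le_antisymm (wt_le_one T j p') (by linarith [wt_nonneg T' j' p'])
            have hi := eq_of_wt_eq_one pts hpts hi1
            have hj := eq_of_wt_eq_one pts hpts hj1
            apply hne
            simp only [fList, Function.comp_apply, hi, hj]


lemma fList_append (L1 L2 : List (Fin n)) :
    fList pts (L1 ++ L2) = fList pts L1 ∘ fList pts L2 := by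
  induction L1 with
  | nil => rfl
  | cons k L ih =>
      show fmap pts k ∘ fList pts (L ++ L2) = (fmap pts k ∘ fList pts L) ∘ fList pts L2
      rw [ih, Function.comp_assoc]

lemma fWord_snoc {m : ℕ} (a : Fin m → Fin n) (k : Fin n) (x : Amb n) :
    fWord pts (Fin.snoc a k) x = fWord pts a (fmap pts k x) := by
  unfold fWord
  rw [List.ofFn_succ']
  have h1 : (fun i => (Fin.snoc a k : Fin (m+1) → Fin n) (Fin.castSucc i)) = a :=
    funext fun i => by simp
  have h2 : (Fin.snoc a k : Fin (m+1) → Fin n) (Fin.last m) = k := by simp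
  rw [h1, h2, List.concat_eq_append, fList_append]
  rfl

lemma energy_eq (hpts : AffineIndependent ℝ pts) (M : ℕ) (u : Amb n → ℝ) :
    energy pts M u = (2:ℝ)⁻¹ * ∑ w : Fin M → Fin n, ∑ i, ∑ j,
      if i = j then 0 else (u (fWord pts w (pts i)) - u (fWord pts w (pts j)))^2 := by
  classical
  have hptsinj : Function.Injective pts := hpts.injective
  set φ : ((Fin M → Fin n) × Fin n × Fin n) → Amb n × Amb n :=
    fun t => (fWord pts t.1 (pts t.2.1), fWord pts t.1 (pts t.2.2)) with hφ
  set S : Finset ((Fin M → Fin n) × Fin n × Fin n) :=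
    Finset.univ.filter (fun t => t.2.1 ≠ t.2.2) with hS
  have hwinj : ∀ (w : Fin M → Fin n) (a b : Fin n),
      fWord pts w (pts a) = fWord pts w (pts b) → a = b :=
    fun w a b h => hptsinj (fList_injective pts _ h)
  have hset : {p : Amb n × Amb n | Adj pts M p.1 p.2} = ↑(S.image φ) := by
    ext p
    simp only [Set.mem_setOf_eq, Finset.coe_image, Set.mem_image, Finset.mem_coe, hS,
      Finset.mem_filter, Finset.mem_univ, true_and]
    constructor
    · rintro ⟨hne, w, ⟨x0, ⟨i, rfl⟩, hx⟩, ⟨y0, ⟨j, rfl⟩, hy⟩⟩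
      refine ⟨(w, i, j), ?_, ?_⟩
      · intro hij
        apply hne
        rw [← hx, ← hy]
        simp only at hij ⊢
        rw [hij]
      · exact Prod.ext hx hy
    · rintro ⟨⟨w, i, j⟩, hij, rfl⟩
      refine ⟨fun h => hij ?_, w, ⟨pts i, ⟨i, rfl⟩, rfl⟩, ⟨pts j, ⟨j, rfl⟩, rfl⟩⟩
      exact hwinj w i j h
  have hinj : ∀ t1 ∈ S, ∀ t2 ∈ S, φ t1 = φ t2 → t1 = t2 := by
    rintro ⟨w, i, j⟩ h1 ⟨w', i', j'⟩ h2 heq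
    simp only [hS, Finset.mem_filter, Finset.mem_univ, true_and] at h1 h2
    have hx : fWord pts w (pts i) = fWord pts w' (pts i') := congrArg Prod.fst heq
    have hy : fWord pts w (pts j) = fWord pts w' (pts j') := congrArg Prod.snd heq
    have hne : fWord pts w (pts i) ≠ fWord pts w (pts j) := fun h => h1 (hwinj w i j h)
    have hw : List.ofFn w = List.ofFn w' :=
      cell_sep pts hpts _ _ (by simp) i j i' j' hx hy hne
    have hww : w = w' := List.ofFn_injective hw
    subst hww
    have hi : i = i' := hwinj w i i' hx
    have hj : j = j' := hwinj w j j' hy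
    rw [hi, hj]
  unfold energy
  rw [hset, finsum_mem_coe_finset, Finset.sum_image hinj]
  congr 1
  rw [hS, Finset.sum_filter, Fintype.sum_prod_type]
  refine Finset.sum_congr rfl fun w _ => ?_
  rw [Fintype.sum_prod_type]
  refine Finset.sum_congr rfl fun i _ => Finset.sum_congr rfl fun j _ => ?_
  by_cases hij : i = j
  · simp [hij]
  · simp [hij, hφ, Ne.symm hij]

/-- The discrete "polarization" identity for double sums. -/
lemma sum_pair {N : ℕ} (f g : Fin N → ℝ) :
    ∑ i, ∑ j, (f i - f j) * (g i - g j)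
      = 2 * ((N:ℝ) * ∑ i, f i * g i) - 2 * (∑ i, f i) * (∑ i, g i) := by
  have h1 : ∀ i, ∑ j, (f i - f j) * (g i - g j)
      = (N:ℝ) * (f i * g i) - f i * (∑ j, g j) - (∑ j, f j) * g i + ∑ j, f j * g j := by
    intro i
    have e : ∀ j, (f i - f j) * (g i - g j)
        = f i * g i - f i * g j - f j * g i + f j * g j := fun j => by ring
    rw [Finset.sum_congr rfl fun j _ => e j, Finset.sum_add_distrib,
      Finset.sum_sub_distrib, Finset.sum_sub_distrib, Finset.sum_const,
      Finset.card_univ, Fintype.card_fin, nsmul_eq_mul, ← Finset.mul_sum, ← Finset.sum_mul]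
  rw [Finset.sum_congr rfl fun i _ => h1 i]
  simp only [Finset.sum_add_distrib, Finset.sum_sub_distrib, Finset.sum_const,
    Finset.card_univ, Fintype.card_fin, nsmul_eq_mul, ← Finset.mul_sum, ← Finset.sum_mul]
  ring

/-- The core algebraic identity behind the renormalization. -/
lemma core {N : ℕ} (v : Fin N → ℝ) :
    ∑ k, ∑ i, ∑ j,
        ((if k = i then v k else (v k + v i + ∑ l, v l) / ((N:ℝ)+2))
          - (if k = j then v k else (v k + v j + ∑ l, v l) / ((N:ℝ)+2)))^2
      = ((N:ℝ)/((N:ℝ)+2)) * ∑ i, ∑ j, (v i - v j)^2 := by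
  classical
  have hc : ((N:ℝ)+2) ≠ 0 := by positivity
  have hQ : ∑ i, ∑ j, (v i - v j)^2
      = 2 * ((N:ℝ) * ∑ l, v l * v l) - 2 * (∑ l, v l) * (∑ l, v l) := by
    rw [Finset.sum_congr rfl fun i _ => Finset.sum_congr rfl fun j (_: j ∈ Finset.univ) =>
      pow_two (v i - v j)]
    exact sum_pair v v
  have inner : ∀ k : Fin N, ∑ i, ∑ j,
      ((if k = i then v k else (v k + v i + ∑ l, v l) / ((N:ℝ)+2))
        - (if k = j then v k else (v k + v j + ∑ l, v l) / ((N:ℝ)+2)))^2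
      = ((2 * ((N:ℝ) * ∑ l, v l * v l) - 2 * (∑ l, v l) * (∑ l, v l))
          + (2*(N:ℝ)+2) * ((N:ℝ) * v k - ∑ l, v l)^2) / ((N:ℝ)+2)^2 := by
    intro k
    have key : ∀ i j : Fin N,
        ((if k = i then v k else (v k + v i + ∑ l, v l) / ((N:ℝ)+2))
          - (if k = j then v k else (v k + v j + ∑ l, v l) / ((N:ℝ)+2)))
        = ((v i - v j) + (((if k = i then (1:ℝ) else 0) - (if k = j then (1:ℝ) else 0))
            * ((N:ℝ) * v k - ∑ l, v l))) / ((N:ℝ)+2) := by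
      intro i j
      by_cases hik : k = i <;> by_cases hjk : k = j
      · subst hik; subst hjk; simp
      · subst hik
        simp only [if_neg hjk, eq_self_iff_true, if_true]
        field_simp
        ring
      · subst hjk
        simp only [if_neg hik, eq_self_iff_true, if_true]
        field_simp
        ring
      · simp only [if_neg hik, if_neg hjk]
        rw [div_sub_div _ _ hc hc, div_eq_div_iff (by positivity) hc]
        ring
    have hχsum : ∑ i, (if k = i then (1:ℝ) else 0) = 1 := by
      rw [Finset.sum_ite_eq Finset.univ k (fun _ => (1:ℝ))]
      simp
    have hvχ : ∑ i, v i * (if k = i then (1:ℝ) else 0) = v k := by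
      simp only [mul_ite, mul_one, mul_zero]
      rw [Finset.sum_ite_eq Finset.univ k v]
      simp
    have hχχ : ∑ i, (if k = i then (1:ℝ) else 0) * (if k = i then (1:ℝ) else 0) = 1 := by
      simp only [ite_mul, one_mul, zero_mul]
      rw [Finset.sum_ite_eq Finset.univ k (fun i => if k = i then (1:ℝ) else 0)]
      simp
    have hA := sum_pair v (fun i => if k = i then (1:ℝ) else 0)
    have hB := sum_pair (fun i => if k = i then (1:ℝ) else 0)
      (fun i => if k = i then (1:ℝ) else 0)
    have hV := sum_pair v v
    rw [hvχ, hχsum] at hA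
    rw [hχχ, hχsum] at hB
    have expand : ∀ i j : Fin N,
        (((v i - v j) + (((if k = i then (1:ℝ) else 0) - (if k = j then (1:ℝ) else 0))
            * ((N:ℝ) * v k - ∑ l, v l))) / ((N:ℝ)+2))^2
        = ((v i - v j) * (v i - v j)
            + (2*((N:ℝ) * v k - ∑ l, v l)) * ((v i - v j)
                * ((if k = i then (1:ℝ) else 0) - (if k = j then (1:ℝ) else 0)))
            + (((N:ℝ) * v k - ∑ l, v l)*((N:ℝ) * v k - ∑ l, v l))
                * (((if k = i then (1:ℝ) else 0) - (if k = j then (1:ℝ) else 0))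
                  * ((if k = i then (1:ℝ) else 0) - (if k = j then (1:ℝ) else 0))))
            / ((N:ℝ)+2)^2 := by
      intro i j
      rw [div_pow, div_eq_div_iff (by positivity) (by positivity)]
      ring
    rw [Finset.sum_congr rfl fun i _ => Finset.sum_congr rfl fun j (_ : j ∈ Finset.univ) =>
      (key i j ▸ expand i j : _)]
    simp only [← Finset.sum_div]
    rw [div_eq_div_iff (by positivity) (by positivity)]
    simp only [Finset.sum_add_distrib, ← Finset.mul_sum]
    rw [hV, hA, hB]
    ring
  rw [Finset.sum_congr rfl fun k (_ : k ∈ Finset.univ) => inner k]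
  have hDsum : ∑ k, ((N:ℝ) * v k - ∑ l, v l)^2
      = (N:ℝ)^2 * (∑ l, v l * v l) - (N:ℝ) * (∑ l, v l) * (∑ l, v l) := by
    have h : ∀ k : Fin N, ((N:ℝ) * v k - ∑ l, v l)^2
        = (N:ℝ)^2 * (v k * v k) - 2*(N:ℝ)*(∑ l, v l) * v k + (∑ l, v l) * (∑ l, v l) :=
      fun k => by ring
    rw [Finset.sum_congr rfl fun k (_ : k ∈ Finset.univ) => h k]
    simp only [Finset.sum_add_distrib, Finset.sum_sub_distrib, ← Finset.mul_sum,
      Finset.sum_const, Finset.card_univ, Fintype.card_fin, nsmul_eq_mul]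
    ring
  simp only [← Finset.sum_div]
  rw [Finset.sum_add_distrib, Finset.sum_const, Finset.card_univ, Fintype.card_fin,
    nsmul_eq_mul, ← Finset.mul_sum, hDsum, hQ]
  field_simp
  ring

lemma drop_ite {N : ℕ} (h : Fin N → ℝ) :
    ∑ i, ∑ j, (if i = j then (0:ℝ) else (h i - h j)^2) = ∑ i, ∑ j, (h i - h j)^2 := by
  refine Finset.sum_congr rfl fun i _ => Finset.sum_congr rfl fun j _ => ?_
  by_cases hij : i = j
  · subst hij; simp
  · rw [if_neg hij]


end Renorm

theorem renormalization
    (n : ℕ) (hn : 2 ≤ n) (pts : Fin n → Amb n) (hpts : AffineIndependent ℝ pts)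
    (m : ℕ) (hm : 1 ≤ m)
    (u u' : Amb n → ℝ)
    (hagree : ∀ x ∈ V pts (m - 1), u' x = u x)
    (hharm : ∀ (a : Fin (m - 1) → Fin n) (r s : Fin n), r ≠ s →
      u' (xpt pts a r s) =
        (2 * (u (xpt pts a r r) + u (xpt pts a s s)) +
            ∑ j ∈ Finset.univ.filter (fun j => j ≠ r ∧ j ≠ s), u (xpt pts a j j)) /
          ((n : ℝ) + 2)) :
    energy pts m u' = ((n : ℝ) / ((n : ℝ) + 2)) * energy pts (m - 1) u := by
  classical
  obtain ⟨m', rfl⟩ : ∃ m', m = m' + 1 := ⟨m - 1, (Nat.succ_pred_eq_of_pos hm).symm⟩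
  simp only [Nat.add_sub_cancel] at hagree hharm ⊢
  rw [Renorm.energy_eq pts hpts (m'+1) u', Renorm.energy_eq pts hpts m' u]
  have hre : ∑ w : Fin (m'+1) → Fin n, (∑ i, ∑ j, if i = j then (0:ℝ) else
        (u' (fWord pts w (pts i)) - u' (fWord pts w (pts j)))^2)
      = ∑ p : Fin n × (Fin m' → Fin n), ∑ i, ∑ j, if i = j then (0:ℝ) else
        (u' (fWord pts (Fin.snoc p.2 p.1) (pts i))
          - u' (fWord pts (Fin.snoc p.2 p.1) (pts j)))^2 :=
    (Fintype.sum_equiv (Fin.snocEquiv (fun _ => Fin n)) _ _ (fun p => rfl)).symm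
  rw [hre, Fintype.sum_prod_type, Finset.sum_comm]
  have hcell : ∀ a : Fin m' → Fin n,
      ∑ k, ∑ i, ∑ j, (if i = j then (0:ℝ) else
        (u' (fWord pts (Fin.snoc a k) (pts i)) - u' (fWord pts (Fin.snoc a k) (pts j)))^2)
      = ((n:ℝ)/((n:ℝ)+2)) * ∑ i, ∑ j, (if i = j then (0:ℝ) else
        (u (fWord pts a (pts i)) - u (fWord pts a (pts j)))^2) := by
    intro a
    have hxii : ∀ j : Fin n, xpt pts a j j = fWord pts a (pts j) := by
      intro j
      unfold xpt
      congr 1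
      rw [← two_smul ℝ (pts j), smul_smul]
      norm_num
    have hval : ∀ k i : Fin n, u' (fWord pts (Fin.snoc a k) (pts i))
        = if k = i then u (fWord pts a (pts k))
          else (u (fWord pts a (pts k)) + u (fWord pts a (pts i))
              + ∑ l, u (fWord pts a (pts l))) / ((n:ℝ)+2) := by
      intro k i
      rw [Renorm.fWord_snoc]
      by_cases hki : k = i
      · subst hki
        have hfix : fmap pts k (pts k) = pts k := by
          unfold fmap
          rw [← two_smul ℝ (pts k), smul_smul]
          norm_num
        rw [hfix, if_pos rfl]
        exact hagree _ (Set.mem_iUnion.2 ⟨a, ⟨pts k, ⟨k, rfl⟩, rfl⟩⟩)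
      · rw [if_neg hki]
        have hxki : fWord pts a (fmap pts k (pts i)) = xpt pts a k i := by
          unfold xpt fmap
          rw [add_comm]
        have hfil : ∑ j ∈ Finset.univ.filter (fun j => j ≠ k ∧ j ≠ i), u (xpt pts a j j)
            = (∑ l, u (fWord pts a (pts l)))
              - u (fWord pts a (pts k)) - u (fWord pts a (pts i)) := by
          rw [Finset.sum_congr rfl fun j _ => by rw [hxii j]]
          have hs : Finset.univ.filter (fun j => j ≠ k ∧ j ≠ i)
              = Finset.univ \ ({k, i} : Finset (Fin n)) := by
            ext j
            simp only [Finset.mem_filter, Finset.mem_univ, true_and, Finset.mem_sdiff,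
              Finset.mem_insert, Finset.mem_singleton]
            tauto
          rw [hs, Finset.sum_sdiff_eq_sub (Finset.subset_univ _),
            Finset.sum_pair hki]
          ring
        rw [hxki, hharm a k i hki, hxii k, hxii i, hfil]
        congr 1
        ring
    rw [Finset.sum_congr rfl fun k (_ : k ∈ Finset.univ) =>
      Renorm.drop_ite (fun i => u' (fWord pts (Fin.snoc a k) (pts i)))]
    rw [Finset.sum_congr rfl fun k (_ : k ∈ Finset.univ) =>
      Finset.sum_congr rfl fun i (_ : i ∈ Finset.univ) =>
      Finset.sum_congr rfl fun j (_ : j ∈ Finset.univ) => by rw [hval k i, hval k j]]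
    rw [Renorm.core (fun i => u (fWord pts a (pts i))),
      Renorm.drop_ite (fun i => u (fWord pts a (pts i)))]
  rw [Finset.sum_congr rfl fun a (_ : a ∈ Finset.univ) => hcell a, ← Finset.mul_sum]
  ring
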